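/- The clipped-Laplace link CLσ(·|d) is point symmetric about (d/2, d/2): for all v ∈ ℝ, CLσ(d/2 + v | d) - d/2 = -(CLσ(d/2 - v | d) - d/2). In particular CLσ(d/2|d) = d/2. -/
import Mathlib

noncomputable def F (u : ℝ) : ℝ := if u ≤ 0 then Real.exp u / 2 else 1 - Real.exp (-u) / 2

noncomputable def L (σ u : ℝ) : ℝ := -σ * Real.log (1 - F (u / σ))

noncomputable def s (σ d : ℝ) : ℝ := (d / 2) / (d / 2 + σ * Real.log 2)

noncomputable def CL (σ d u : ℝ) : ℝ :=
  s σ d * (L σ u - u - L σ (d - u)) + d / 2 * (1 + s σ d)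

theorem stmt16 (d : ℝ) (hd : 0 < d) (σ : ℝ) (hσ : 0 < σ) :
    (∀ v : ℝ, CL σ d (d / 2 + v) - d / 2 = -(CL σ d (d / 2 - v) - d / 2)) ∧
    CL σ d (d / 2) = d / 2 := by
  have key : ∀ v : ℝ, CL σ d (d / 2 + v) - d / 2 = -(CL σ d (d / 2 - v) - d / 2) := by
    intro v
    have h1 : d - (d / 2 + v) = d / 2 - v := by ring
    have h2 : d - (d / 2 - v) = d / 2 + v := by ring
    simp only [CL, h1, h2]
    ring
  refine ⟨key, ?_⟩
  have := key 0
  simp at this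
  linarith
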